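/- For nonnegative tensors F, G ∈ R_+^{m1×⋯×md} and α, β > 0 with α + β = 1, the spectral norm satisfies ‖F^{∘α} ∘ G^{∘β}‖_∞ ≤ ‖F‖_∞^α ‖G‖_∞^β, i.e., the spectral norm is log-convex in the entrywise logarithms. -/

import Mathlib

/-- The multilinear form `T × (x₁ ⊗ ⋯ ⊗ x_d)` of a real `d`-tensor of shape `m`. -/
noncomputable def tform {d : ℕ} {m : Fin d → ℕ}
    (T : ((i : Fin d) → Fin (m i)) → ℝ) (x : (i : Fin d) → Fin (m i) → ℝ) : ℝ :=
  ∑ idx : (i : Fin d) → Fin (m i), T idx * ∏ i, x i (idx i)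

/-- Spectral norm of a nonnegative tensor. -/
noncomputable def specNorm {d : ℕ} {m : Fin d → ℕ}
    (T : ((i : Fin d) → Fin (m i)) → ℝ) : ℝ :=
  sSup {r | ∃ x : (i : Fin d) → Fin (m i) → ℝ,
    (∀ i j, 0 ≤ x i j) ∧ (∀ i, ∑ j, (x i j) ^ 2 = 1) ∧ r = tform T x}

lemma tform_le_sum {d : ℕ} {m : Fin d → ℕ}
    (T : ((i : Fin d) → Fin (m i)) → ℝ) (hT : ∀ idx, 0 ≤ T idx)
    (x : (i : Fin d) → Fin (m i) → ℝ) (hx1 : ∀ i j, 0 ≤ x i j)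
    (hx2 : ∀ i, ∑ j, (x i j) ^ 2 = 1) :
    tform T x ≤ ∑ idx : (i : Fin d) → Fin (m i), T idx := by
  apply Finset.sum_le_sum
  intro idx _
  have hle : ∀ i : Fin d, x i (idx i) ≤ 1 := by
    intro i
    have h1 : x i (idx i) ^ 2 ≤ 1 := by
      rw [← hx2 i]
      exact Finset.single_le_sum (f := fun j => x i j ^ 2) (fun j _ => sq_nonneg _) (Finset.mem_univ _)
    nlinarith [hx1 i (idx i)]
  calc T idx * ∏ i, x i (idx i) ≤ T idx * 1 :=
        mul_le_mul_of_nonneg_left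
          (Finset.prod_le_one (fun i _ => hx1 i (idx i)) (fun i _ => hle i)) (hT idx)
    _ = T idx := mul_one _

lemma tform_le_specNorm {d : ℕ} {m : Fin d → ℕ}
    (T : ((i : Fin d) → Fin (m i)) → ℝ) (hT : ∀ idx, 0 ≤ T idx)
    (x : (i : Fin d) → Fin (m i) → ℝ) (hx1 : ∀ i j, 0 ≤ x i j)
    (hx2 : ∀ i, ∑ j, (x i j) ^ 2 = 1) :
    tform T x ≤ specNorm T := by
  apply le_csSup
  · refine ⟨∑ idx : (i : Fin d) → Fin (m i), T idx, ?_⟩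
    rintro r ⟨y, hy1, hy2, rfl⟩
    exact tform_le_sum T hT y hy1 hy2
  · exact ⟨x, hx1, hx2, rfl⟩

lemma specNorm_nonneg {d : ℕ} {m : Fin d → ℕ} (hm : ∀ i, 0 < m i)
    (T : ((i : Fin d) → Fin (m i)) → ℝ) (hT : ∀ idx, 0 ≤ T idx) :
    0 ≤ specNorm T := by
  set x0 : (i : Fin d) → Fin (m i) → ℝ := fun i j => if j = ⟨0, hm i⟩ then 1 else 0 with hx0
  have hx1 : ∀ i j, 0 ≤ x0 i j := by
    intro i j; simp only [hx0]; split <;> norm_num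
  have hx2 : ∀ i, ∑ j, (x0 i j) ^ 2 = 1 := by
    intro i
    simp only [hx0]
    rw [Finset.sum_eq_single ⟨0, hm i⟩]
    · simp
    · intro b _ hb; simp [hb]
    · simp
  have h0 : 0 ≤ tform T x0 := by
    apply Finset.sum_nonneg
    intro idx _
    exact mul_nonneg (hT idx) (Finset.prod_nonneg fun i _ => hx1 i (idx i))
  exact h0.trans (tform_le_specNorm T hT x0 hx1 hx2)

/-- For nonnegative tensors `F, G` and `α, β > 0` with `α + β = 1`,
`‖F^{∘α} ∘ G^{∘β}‖_∞ ≤ ‖F‖_∞^α · ‖G‖_∞^β`. -/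
theorem spectral_norm_log_convex
    (d : ℕ) (m : Fin d → ℕ) (hm : ∀ i, 0 < m i)
    (F G : ((i : Fin d) → Fin (m i)) → ℝ)
    (hF : ∀ idx, 0 ≤ F idx) (hG : ∀ idx, 0 ≤ G idx)
    (α β : ℝ) (hα : 0 < α) (hβ : 0 < β) (hαβ : α + β = 1) :
    specNorm (fun idx => F idx ^ α * G idx ^ β) ≤
      specNorm F ^ α * specNorm G ^ β := by
  have hα1 : α < 1 := by linarith
  have hpq : Real.HolderConjugate α⁻¹ β⁻¹ := by
    rw [Real.holderConjugate_iff]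
    constructor
    · rw [← inv_one]
      exact (inv_lt_inv₀ one_pos hα).mpr hα1
    · rw [inv_inv, inv_inv]; exact hαβ
  apply Real.sSup_le
  · rintro r ⟨x, hx1, hx2, rfl⟩
    have hP : ∀ idx : (i : Fin d) → Fin (m i), 0 ≤ ∏ i, x i (idx i) :=
      fun idx => Finset.prod_nonneg fun i _ => hx1 i (idx i)
    have hFx : 0 ≤ tform F x := Finset.sum_nonneg fun idx _ => mul_nonneg (hF idx) (hP idx)
    have hGx : 0 ≤ tform G x := Finset.sum_nonneg fun idx _ => mul_nonneg (hG idx) (hP idx)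
    have key : tform (fun idx => F idx ^ α * G idx ^ β) x ≤
        (tform F x) ^ α * (tform G x) ^ β := by
      unfold tform
      have H := Real.inner_le_Lp_mul_Lq_of_nonneg (Finset.univ)
        (f := fun idx : (i : Fin d) → Fin (m i) => (F idx * ∏ i, x i (idx i)) ^ α)
        (g := fun idx : (i : Fin d) → Fin (m i) => (G idx * ∏ i, x i (idx i)) ^ β)
        hpq
        (fun idx _ => Real.rpow_nonneg (mul_nonneg (hF idx) (hP idx)) α)
        (fun idx _ => Real.rpow_nonneg (mul_nonneg (hG idx) (hP idx)) β)
      have e1 : ∀ idx : (i : Fin d) → Fin (m i),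
          (F idx * ∏ i, x i (idx i)) ^ α * (G idx * ∏ i, x i (idx i)) ^ β =
          F idx ^ α * G idx ^ β * ∏ i, x i (idx i) := by
        intro idx
        rw [Real.mul_rpow (hF idx) (hP idx), Real.mul_rpow (hG idx) (hP idx)]
        have : (∏ i, x i (idx i)) ^ α * (∏ i, x i (idx i)) ^ β
            = ∏ i, x i (idx i) := by
          rw [← Real.rpow_add' (hP idx) (by rw [hαβ]; norm_num), hαβ, Real.rpow_one]
        linear_combination F idx ^ α * G idx ^ β * this
      have e2 : ∀ idx : (i : Fin d) → Fin (m i),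
          ((F idx * ∏ i, x i (idx i)) ^ α) ^ α⁻¹ = F idx * ∏ i, x i (idx i) := by
        intro idx
        rw [← Real.rpow_mul (mul_nonneg (hF idx) (hP idx)), mul_inv_cancel₀ hα.ne',
          Real.rpow_one]
      have e3 : ∀ idx : (i : Fin d) → Fin (m i),
          ((G idx * ∏ i, x i (idx i)) ^ β) ^ β⁻¹ = G idx * ∏ i, x i (idx i) := by
        intro idx
        rw [← Real.rpow_mul (mul_nonneg (hG idx) (hP idx)), mul_inv_cancel₀ hβ.ne',
          Real.rpow_one]
      simp only [e1, e2, e3, one_div, inv_inv] at H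
      exact H
    refine key.trans ?_
    have h1 : (tform F x) ^ α ≤ (specNorm F) ^ α :=
      Real.rpow_le_rpow hFx (tform_le_specNorm F hF x hx1 hx2) hα.le
    have h2 : (tform G x) ^ β ≤ (specNorm G) ^ β :=
      Real.rpow_le_rpow hGx (tform_le_specNorm G hG x hx1 hx2) hβ.le
    exact mul_le_mul h1 h2 (Real.rpow_nonneg hGx β)
      (Real.rpow_nonneg (hFx.trans (tform_le_specNorm F hF x hx1 hx2)) α)
  · exact mul_nonneg (Real.rpow_nonneg (specNorm_nonneg hm F hF) α)
      (Real.rpow_nonneg (specNorm_nonneg hm G hG) β)
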